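/- Let X be a spectral topological space written as an inverse limit X = lim X_j of a cofiltered system of spectral spaces with quasi-compact transition maps, and let (V_j ⊆ X_j) be compatible quasi-compact open subsets (V_j is the preimage of V_{j0} for j ≥ j0) whose inverse limit equals X (i.e., lim V_j = X inside lim X_j). Then V_j = X_j for all sufficiently large j. -/

import Mathlib

open Set Filter TopologicalSpace Topology

section Aux

variable {α : Type*} [TopologicalSpace α]

/-- A finite intersection of quasi-compact open sets in a quasi-separated space is
quasi-compact open. -/
lemma aux_finset_iInter_qc [CompactSpace α] [QuasiSeparatedSpace α] {ι : Type*}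
    {W : ι → Set α} (hWo : ∀ a, IsOpen (W a)) (hWc : ∀ a, IsCompact (W a))
    (s : Finset ι) : IsOpen (⋂ a ∈ s, W a) ∧ IsCompact (⋂ a ∈ s, W a) := by
  classical
  induction s using Finset.induction_on with
  | empty => exact ⟨by simpa using isOpen_univ, by simpa using isCompact_univ⟩
  | @insert a s ha ih =>
    rw [Finset.set_biInter_insert]
    exact ⟨(hWo a).inter ih.1,
      QuasiSeparatedSpace.inter_isCompact _ _ (hWo a) (hWc a) ih.1 ih.2⟩

/-- In a chain of sets, every finite subfamily has a lower bound in the chain. -/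
lemma aux_chain_min {c : Set (Set α)} (hc : IsChain (· ⊆ ·) c) {Z₀ : Set α} (hZ₀ : Z₀ ∈ c)
    (t : Finset c) : ∃ Z' ∈ c, Z' ⊆ ⋂ Z ∈ t, (Z : Set α) := by
  classical
  induction t using Finset.induction_on with
  | empty => exact ⟨Z₀, hZ₀, by simp⟩
  | @insert Z t hZt ih =>
    obtain ⟨Z', hZ'c, hZ'⟩ := ih
    rw [Finset.set_biInter_insert]
    rcases hc.total Z.2 hZ'c with h | h
    · exact ⟨(Z : Set α), Z.2, subset_inter subset_rfl (h.trans hZ')⟩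
    · exact ⟨Z', hZ'c, subset_inter h hZ'⟩

/-- FIP for families of quasi-compact opens and closed sets in a compact quasi-separated
sober space. -/
lemma aux_fip [CompactSpace α] [QuasiSeparatedSpace α] [QuasiSober α] {ι κ : Type*}
    (W : ι → Set α) (hWo : ∀ a, IsOpen (W a)) (hWc : ∀ a, IsCompact (W a))
    (F : κ → Set α) (hF : ∀ c, IsClosed (F c))
    (h : ∀ (s : Finset ι) (t : Finset κ), ((⋂ a ∈ s, W a) ∩ ⋂ c ∈ t, F c).Nonempty) :
    ((⋂ a, W a) ∩ ⋂ c, F c).Nonempty := by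
  classical
  set 𝒮 : Set (Set α) :=
    {Z | IsClosed Z ∧ ∀ s : Finset ι, ((⋂ a ∈ s, W a) ∩ Z).Nonempty} with h𝒮
  have hx₀ : (⋂ c, F c) ∈ 𝒮 := by
    refine ⟨isClosed_iInter hF, fun s => ?_⟩
    exact (aux_finset_iInter_qc hWo hWc s).2.inter_iInter_nonempty F hF (fun t => h s t)
  have hchain' : ∀ c ⊆ 𝒮, IsChain (· ⊆ ·) c → c.Nonempty →
      ∃ lb ∈ 𝒮, ∀ s ∈ c, lb ⊆ s := by
    intro c hc𝒮 hchain hcne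
    obtain ⟨Z₀, hZ₀⟩ := hcne
    refine ⟨⋂₀ c, ⟨isClosed_sInter fun Z hZ => (hc𝒮 hZ).1, fun s => ?_⟩,
      fun Z hZ => sInter_subset_of_mem hZ⟩
    rw [sInter_eq_iInter]
    refine (aux_finset_iInter_qc hWo hWc s).2.inter_iInter_nonempty _
      (fun Z => (hc𝒮 Z.2).1) (fun t => ?_)
    obtain ⟨Z', hZ'c, hZ'⟩ := aux_chain_min hchain hZ₀ t
    exact ((hc𝒮 hZ'c).2 s).mono (inter_subset_inter_right _ hZ')
  obtain ⟨Z, hZx₀, hZmin⟩ := zorn_superset_nonempty 𝒮 hchain' _ hx₀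
  -- the minimal element is irreducible
  have hZcl : IsClosed Z := hZmin.prop.1
  have hZne : Z.Nonempty := by
    have := hZmin.prop.2 (∅ : Finset ι)
    simpa using this
  have hZirr : IsIrreducible Z := by
    refine ⟨hZne, fun u v hu hv hZu hZv => ?_⟩
    by_contra hempty
    rw [Set.not_nonempty_iff_eq_empty] at hempty
    have key : (Z \ u) ∈ 𝒮 ∨ (Z \ v) ∈ 𝒮 := by
      by_contra hk
      push_neg at hk
      obtain ⟨h1, h2⟩ := hk
      have e1 : ∃ s1 : Finset ι, ((⋂ a ∈ s1, W a) ∩ (Z \ u)) = ∅ := by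
        by_contra he; push_neg at he
        exact h1 ⟨hZcl.sdiff hu, fun s => he s⟩
      have e2 : ∃ s2 : Finset ι, ((⋂ a ∈ s2, W a) ∩ (Z \ v)) = ∅ := by
        by_contra he; push_neg at he
        exact h2 ⟨hZcl.sdiff hv, fun s => he s⟩
      obtain ⟨s1, hs1⟩ := e1
      obtain ⟨s2, hs2⟩ := e2
      obtain ⟨y, hyW, hyZ⟩ := hZmin.prop.2 (s1 ∪ s2)
      have hyW1 : y ∈ ⋂ a ∈ s1, W a :=
        mem_iInter₂.2 fun a haa => mem_iInter₂.1 hyW a (Finset.mem_union_left _ haa)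
      have hyW2 : y ∈ ⋂ a ∈ s2, W a :=
        mem_iInter₂.2 fun a haa => mem_iInter₂.1 hyW a (Finset.mem_union_right _ haa)
      have hyu : y ∈ u := by
        by_contra hyu
        exact absurd hs1 (Set.nonempty_iff_ne_empty.1 ⟨y, hyW1, hyZ, hyu⟩)
      have hyv : y ∈ v := by
        by_contra hyv
        exact absurd hs2 (Set.nonempty_iff_ne_empty.1 ⟨y, hyW2, hyZ, hyv⟩)
      exact absurd hempty (Set.nonempty_iff_ne_empty.1 ⟨y, hyZ, hyu, hyv⟩)
    rcases key with hk | hk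
    · have := hZmin.2 hk diff_subset
      exact hZu.not_subset_empty (by intro y hy; exact (this hy.1).2 hy.2) |>.elim
    · have := hZmin.2 hk diff_subset
      exact hZv.not_subset_empty (by intro y hy; exact (this hy.1).2 hy.2) |>.elim
  obtain ⟨ξ, hξ⟩ := QuasiSober.sober hZirr hZcl
  have hξZ : ξ ∈ Z := hξ.mem
  refine ⟨ξ, mem_iInter.2 fun a => ?_, hZx₀ hξZ⟩
  obtain ⟨y, hyW, hyZ⟩ := hZmin.prop.2 ({a} : Finset ι)
  simp only [Finset.mem_singleton, iInter_iInter_eq_left] at hyW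
  rw [← hξ] at hyZ
  obtain ⟨w, hw1, hw2⟩ := mem_closure_iff.1 hyZ (W a) (hWo a) hyW
  rwa [Set.mem_singleton_iff.1 hw2] at hw1

/-- The patch (constructible) topology. -/
def patchTop (α : Type*) [TopologicalSpace α] : TopologicalSpace α :=
  TopologicalSpace.generateFrom
    ({U | IsOpen U ∧ IsCompact U} ∪ compl '' {U | IsOpen U ∧ IsCompact U})

lemma patch_isOpen {U : Set α} (h : IsOpen U) (h' : IsCompact U) :
    IsOpen[patchTop α] U :=
  TopologicalSpace.GenerateOpen.basic _ (Or.inl ⟨h, h'⟩)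

lemma patch_isOpen_compl {U : Set α} (h : IsOpen U) (h' : IsCompact U) :
    IsOpen[patchTop α] Uᶜ :=
  TopologicalSpace.GenerateOpen.basic _ (Or.inr ⟨U, ⟨h, h'⟩, rfl⟩)

/-- The patch topology is compact: every ultrafilter converges. -/
lemma patch_ultrafilter_converges [CompactSpace α] [QuasiSeparatedSpace α] [QuasiSober α]
    (𝒢 : Ultrafilter α) : ∃ x, (𝒢 : Filter α) ≤ @nhds α (patchTop α) x := by
  classical
  set ι := {U : Set α // (IsOpen U ∧ IsCompact U) ∧ U ∈ 𝒢}
  set κ := {U : Set α // (IsOpen U ∧ IsCompact U) ∧ Uᶜ ∈ 𝒢}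
  have hfip : ∀ (s : Finset ι) (t : Finset κ),
      ((⋂ a ∈ s, (a : Set α)) ∩ ⋂ c ∈ t, ((c : Set α)ᶜ)).Nonempty := by
    intro s t
    refine Ultrafilter.nonempty_of_mem (f := 𝒢) (inter_mem ?_ ?_)
    · exact (Filter.biInter_finset_mem s).2 fun a _ => a.2.2
    · exact (Filter.biInter_finset_mem t).2 fun c _ => c.2.2
  obtain ⟨x, hx1, hx2⟩ := aux_fip (fun a : ι => (a : Set α)) (fun a => a.2.1.1)
    (fun a => a.2.1.2) (fun c : κ => ((c : Set α)ᶜ)) (fun c => c.2.1.1.isClosed_compl) hfip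
  refine ⟨x, ?_⟩
  rw [patchTop, nhds_generateFrom]
  refine le_iInf₂ fun s hs => le_principal_iff.2 ?_
  obtain ⟨hxs, hssub⟩ := hs
  rcases hssub with ⟨ho, hc⟩ | ⟨U, ⟨ho, hc⟩, rfl⟩
  · rcases 𝒢.mem_or_compl_mem s with h | h
    · exact h
    · exact absurd (mem_iInter.1 hx2 ⟨s, ⟨ho, hc⟩, h⟩) (by simpa using hxs)
  · rcases 𝒢.mem_or_compl_mem U with h | h
    · exact absurd (mem_iInter.1 hx1 ⟨U, ⟨ho, hc⟩, h⟩) hxs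
    · exact h

/-- Uniqueness of patch limits of ultrafilters, given T0 and a quasi-compact open basis. -/
lemma patch_limit_unique [T0Space α]
    (hb : IsTopologicalBasis {U : Set α | IsOpen U ∧ IsCompact U})
    (𝒢 : Ultrafilter α) {x y : α} (hx : (𝒢 : Filter α) ≤ @nhds α (patchTop α) x)
    (hy : (𝒢 : Filter α) ≤ @nhds α (patchTop α) y) : x = y := by
  by_contra hne
  have key : ∀ (a b : α), (𝒢 : Filter α) ≤ @nhds α (patchTop α) a →
      (𝒢 : Filter α) ≤ @nhds α (patchTop α) b →
      ∀ U : Set α, IsOpen U → IsCompact U → a ∈ U → b ∉ U → False := by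
    intro a b ha hb' U hUo hUc haU hbU
    have h1 : U ∈ 𝒢 :=
      ha (@IsOpen.mem_nhds α (patchTop α) a U (patch_isOpen hUo hUc) haU)
    have h2 : Uᶜ ∈ 𝒢 :=
      hb' (@IsOpen.mem_nhds α (patchTop α) b Uᶜ (patch_isOpen_compl hUo hUc) hbU)
    exact absurd h1 (Ultrafilter.compl_mem_iff_notMem.1 h2)
  have : ¬Inseparable x y := fun h => hne h.eq
  rw [inseparable_iff_forall_isOpen] at this
  push_neg at this
  obtain ⟨s, hso, hsne⟩ := this
  rcases hsne with ⟨hxs, hys⟩ | ⟨hxs, hys⟩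
  · obtain ⟨U, ⟨hUo, hUc⟩, hxU, hUs⟩ := hb.exists_subset_of_mem_open hxs hso
    exact key x y hx hy U hUo hUc hxU (fun h => hys (hUs h))
  · obtain ⟨U, ⟨hUo, hUc⟩, hyU, hUs⟩ := hb.exists_subset_of_mem_open hys hso
    exact key y x hy hx U hUo hUc hyU (fun h => hxs (hUs h))

/-- Spectral maps are continuous for the patch topologies. -/
lemma patch_continuous {β : Type*} [TopologicalSpace β] {g : α → β} (hg : IsSpectralMap g) :
    Continuous[patchTop α, patchTop β] g := by
  show Continuous[patchTop α, TopologicalSpace.generateFrom _] g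
  rw [continuous_generateFrom_iff]
  rintro s (⟨ho, hc⟩ | ⟨U, ⟨ho, hc⟩, rfl⟩)
  · exact patch_isOpen (ho.preimage hg.continuous) (hc.preimage_of_isOpen hg ho)
  · rw [Set.preimage_compl]
    exact patch_isOpen_compl (ho.preimage hg.continuous) (hc.preimage_of_isOpen hg ho)

end Aux

/-- Let `X = lim X_j` be an inverse limit of a cofiltered system of spectral
spaces with quasi-compact (spectral) transition maps, and let `V_j ⊆ X_j` be compatible
quasi-compact open subsets whose inverse limit equals `X` (every point of the limit lies in
every `V_j`). Then `V_j = X_j` for all sufficiently large `j`.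

Spectral spaces are encoded as compact, T0, quasi-sober, quasi-separated spaces in which the
quasi-compact open sets form a topological basis. -/
theorem stmt14 (J : Type*) [Preorder J] [IsDirected J (· ≤ ·)] [Nonempty J]
    (X : J → Type*) [∀ j, TopologicalSpace (X j)]
    -- each `X j` is a spectral space:
    [∀ j, CompactSpace (X j)] [∀ j, T0Space (X j)] [∀ j, QuasiSober (X j)]
    [∀ j, QuasiSeparatedSpace (X j)]
    (hbasis : ∀ j, TopologicalSpace.IsTopologicalBasis
      {U : Set (X j) | IsOpen U ∧ IsCompact U})
    -- the transition maps, spectral and compatible: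
    (f : ∀ {i j : J}, i ≤ j → X j → X i)
    (hf_id : ∀ j (x : X j), f (le_refl j) x = x)
    (hf_comp : ∀ {i j k : J} (hij : i ≤ j) (hjk : j ≤ k) (x : X k),
      f hij (f hjk x) = f (hij.trans hjk) x)
    (hf_spectral : ∀ {i j : J} (h : i ≤ j), IsSpectralMap (f h))
    -- compatible quasi-compact opens:
    (V : ∀ j, Set (X j))
    (hV_open : ∀ j, IsOpen (V j)) (hV_cpt : ∀ j, IsCompact (V j))
    (hV_compat : ∀ {i j : J} (h : i ≤ j), V j = f h ⁻¹' V i)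
    -- the inverse limit of the `V_j` is all of the inverse limit of the `X_j`:
    (hlim : ∀ u : {u : ∀ j, X j // ∀ (i j : J) (h : i ≤ j), f h (u j) = u i},
      ∀ j, u.1 j ∈ V j) :
    ∃ j₀ : J, ∀ j, j₀ ≤ j → V j = Set.univ := by
  classical
  by_contra hcon
  push_neg at hcon
  have hZ : ∀ j, ((V j)ᶜ).Nonempty := by
    intro j
    obtain ⟨j', hj, hne⟩ := hcon j
    rw [Set.nonempty_compl]
    intro heq
    exact hne (by rw [hV_compat hj, heq, Set.preimage_univ])
  choose z hz using hZ
  have hatTop : (Filter.atTop : Filter J).NeBot :=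
    Filter.atTop_neBot_iff.2 ⟨‹_›, ‹_›⟩
  let 𝒰 : Ultrafilter J := @Ultrafilter.of J Filter.atTop hatTop
  have h𝒰 : ∀ j₀ : J, Set.Ici j₀ ∈ 𝒰 := fun j₀ =>
    (@Ultrafilter.of_le J Filter.atTop hatTop) (Filter.Ici_mem_atTop j₀)
  let g : ∀ i : J, J → X i := fun i j => if h : i ≤ j then f h (z j) else z i
  let F : ∀ i : J, Ultrafilter (X i) := fun i => 𝒰.map (g i)
  have hconv : ∀ i, ∃ x, (F i : Filter (X i)) ≤ @nhds (X i) (patchTop (X i)) x := fun i =>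
    patch_ultrafilter_converges (F i)
  choose u hu using hconv
  have humem : ∀ i, u i ∉ V i := by
    intro i hmem
    have h1 : V i ∈ F i := (hu i)
      (@IsOpen.mem_nhds (X i) (patchTop (X i)) (u i) (V i)
        (patch_isOpen (hV_open i) (hV_cpt i)) hmem)
    have h2 : (V i)ᶜ ∈ F i := by
      refine Ultrafilter.mem_map.2 (Filter.mem_of_superset (h𝒰 i) ?_)
      intro j hij
      show g i j ∈ (V i)ᶜ
      simp only [g, dif_pos (Set.mem_Ici.1 hij)]
      have := hz j
      rw [hV_compat (Set.mem_Ici.1 hij)] at this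
      exact this
    exact absurd h1 (Ultrafilter.compl_mem_iff_notMem.1 h2)
  have hucompat : ∀ (i j : J) (h : i ≤ j), f h (u j) = u i := by
    intro i j hij
    have hmapeq : Filter.map (f hij) (F j : Filter (X j)) = (F i : Filter (X i)) := by
      show Filter.map (f hij) (Filter.map (g j) 𝒰) = Filter.map (g i) 𝒰
      rw [Filter.map_map]
      apply Filter.map_congr
      filter_upwards [h𝒰 j] with k hk
      have hk' : j ≤ k := Set.mem_Ici.1 hk
      show f hij (g j k) = g i k
      simp only [g, dif_pos hk', dif_pos (hij.trans hk')]
      exact hf_comp hij hk' (z k)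
    have hlim2 : (F i : Filter (X i)) ≤ @nhds (X i) (patchTop (X i)) (f hij (u j)) := by
      rw [← hmapeq]
      have hcont : Continuous[patchTop (X j), patchTop (X i)] (f hij) :=
        patch_continuous (hf_spectral hij)
      calc Filter.map (f hij) (F j : Filter (X j))
          ≤ Filter.map (f hij) (@nhds (X j) (patchTop (X j)) (u j)) :=
            Filter.map_mono (hu j)
        _ ≤ @nhds (X i) (patchTop (X i)) (f hij (u j)) :=
            @Continuous.tendsto (X j) (X i) (patchTop (X j)) (patchTop (X i)) (f hij)
              hcont (u j)
    exact patch_limit_unique (hbasis i) (F i) hlim2 (hu i)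
  obtain ⟨j⟩ := ‹Nonempty J›
  exact humem j (hlim ⟨u, hucompat⟩ j)
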